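/- Let G be a topological group, let ν ∈ Meas(rG) be a left-invariant mean, let μ ∈ Meas(rG) be a uniform measure, and let f ∈ Ub(rG). Then the function L_μ f : y ↦ μ(x ↦ f(x·y)) belongs to Ub(rG), and ν(L_μ f) = (μ ⋆ ν)(f) = μ(1) · ν(f), where 1 is the constant function with value 1. -/

import Mathlib

noncomputable section

open Filter Topology

/-- `f` is a bounded uniformly continuous real-valued function,
i.e. a member of `Ub(X)`. -/
def IsUb {X : Type*} [UniformSpace X] (f : X → ℝ) : Prop :=
  UniformContinuous f ∧ ∃ C : ℝ, ∀ x, |f x| ≤ C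

/-- Supremum norm of a real-valued function. -/
def supNorm {α : Type*} (f : α → ℝ) : ℝ :=
  sSup (Set.range fun x => |f x|)

/-- `μ` is (the restriction to `Ub(X)` of) a norm-continuous linear functional on `Ub(X)`,
i.e. a member of `Meas(X)`.  It is represented as a bare map on all functions;
only its values on `Ub(X)` are relevant. -/
def IsMeas {X : Type*} [UniformSpace X] (μ : (X → ℝ) → ℝ) : Prop :=
  (∀ f g : X → ℝ, IsUb f → IsUb g → μ (f + g) = μ f + μ g) ∧
  (∀ (c : ℝ) (f : X → ℝ), IsUb f → μ (c • f) = c * μ f) ∧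
  (∃ C : ℝ, ∀ f : X → ℝ, IsUb f → (∀ x, |f x| ≤ 1) → |μ f| ≤ C)

/-- The dual norm on `Meas(X)`:  `‖μ‖ = sup {|μ f| : f ∈ Ub(X), ‖f‖ ≤ 1}`. -/
def measNorm {X : Type*} [UniformSpace X] (μ : (X → ℝ) → ℝ) : ℝ :=
  sSup {r : ℝ | ∃ f : X → ℝ, IsUb f ∧ (∀ x, |f x| ≤ 1) ∧ r = |μ f|}

/-- `μ` is a positive functional:  `μ f ≥ 0` whenever `f ∈ Ub(X)` and `f ≥ 0`. -/
def IsPositive {X : Type*} [UniformSpace X] (μ : (X → ℝ) → ℝ) : Prop :=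
  ∀ f : X → ℝ, IsUb f → (∀ x, 0 ≤ f x) → 0 ≤ μ f

/-- `μ` is a *uniform measure*: on every norm-bounded uniformly equicontinuous set
`H ⊆ Ub(X)`, `μ` is continuous for the topology of pointwise convergence. -/
def IsUniformMeasure {X : Type*} [UniformSpace X] (μ : (X → ℝ) → ℝ) : Prop :=
  ∀ H : Set (X → ℝ),
    (∃ C : ℝ, ∀ f ∈ H, ∀ x, |f x| ≤ C) →
    H.UniformEquicontinuous →
    ∀ f₀ ∈ H, ∀ ε : ℝ, 0 < ε →
      ∃ (K : Finset X) (δ : ℝ), 0 < δ ∧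
        ∀ f ∈ H, (∀ x ∈ K, |f x - f₀ x| < δ) → |μ f - μ f₀| < ε

/-- A *semiuniform* function on `X × Y`, i.e. a member of `Ub(X ⋉ Y)` where `X ⋉ Y` is the
semiuniform product: `f` is bounded, the family of sections `x ↦ f (x, y)` (for `y ∈ Y`)
is uniformly equicontinuous on `X`, and every section `y ↦ f (x, y)` is uniformly
continuous on `Y`. -/
def Semiuniform {X Y : Type*} [UniformSpace X] [UniformSpace Y] (f : X × Y → ℝ) : Prop :=
  (∃ C : ℝ, ∀ p, |f p| ≤ C) ∧
  UniformEquicontinuous (fun y : Y => fun x : X => f (x, y)) ∧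
  ∀ x : X, UniformContinuous fun y : Y => f (x, y)

/-- The direct product `μ ⊗ ν`, evaluated at `f : X × Y → ℝ`:
`(μ ⊗ ν)(f) = μ (x ↦ ν (y ↦ f (x, y)))`. -/
def dirProd {X Y : Type*} (μ : (X → ℝ) → ℝ) (ν : (Y → ℝ) → ℝ) (f : X × Y → ℝ) : ℝ :=
  μ fun x => ν fun y => f (x, y)

/-- Convolution: `(μ ⋆ ν)(f) = μ (x ↦ ν (y ↦ f (x · y)))`. -/
def conv {G : Type*} [Mul G] (μ ν : (G → ℝ) → ℝ) : (G → ℝ) → ℝ :=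
  fun f => μ fun x => ν fun y => f (x * y)

/-- The weak-* topology on `Meas(X)`: the topology of pointwise convergence on `Ub(X)`. -/
def weakStarMeas (X : Type*) [UniformSpace X] :
    TopologicalSpace {ν : (X → ℝ) → ℝ // IsMeas ν} :=
  TopologicalSpace.induced
    (fun ν => fun f : {f : X → ℝ // IsUb f} => ν.1 f.1) Pi.topologicalSpace

open Uniformity

section basic
variable {X : Type*} [UniformSpace X]

lemma isUb_const (c : ℝ) : IsUb (fun _ : X => c) :=
  ⟨uniformContinuous_const, ⟨|c|, fun _ => le_rfl⟩⟩

lemma isUb_zero : IsUb (fun _ : X => (0:ℝ)) := isUb_const 0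

lemma IsUb.add {f g : X → ℝ} (hf : IsUb f) (hg : IsUb g) : IsUb (fun x => f x + g x) := by
  obtain ⟨hf1, Cf, hf2⟩ := hf; obtain ⟨hg1, Cg, hg2⟩ := hg
  exact ⟨hf1.add hg1, ⟨Cf + Cg, fun x =>
    (abs_add_le _ _).trans (add_le_add (hf2 x) (hg2 x))⟩⟩

lemma IsUb.smul {f : X → ℝ} (c : ℝ) (hf : IsUb f) : IsUb (fun x => c * f x) := by
  obtain ⟨hf1, Cf, hf2⟩ := hf
  have huc : UniformContinuous fun x => c * f x := by
    have := hf1.const_smul c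
    simpa [Pi.smul_def, smul_eq_mul] using this
  refine ⟨huc, ⟨|c| * Cf, fun x => ?_⟩⟩
  rw [abs_mul]
  exact mul_le_mul_of_nonneg_left (hf2 x) (abs_nonneg c)

lemma IsUb.neg {f : X → ℝ} (hf : IsUb f) : IsUb (fun x => -f x) := by
  have := hf.smul (-1); simpa using this

lemma IsUb.sub {f g : X → ℝ} (hf : IsUb f) (hg : IsUb g) : IsUb (fun x => f x - g x) := by
  have := hf.add hg.neg; simpa [sub_eq_add_neg] using this

lemma isUb_finset_sum {ι : Type*} (s : Finset ι) (g : ι → X → ℝ)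
    (h : ∀ i ∈ s, IsUb (g i)) : IsUb (fun y => ∑ i ∈ s, g i y) := by
  classical
  induction s using Finset.induction with
  | empty => simpa using (isUb_zero (X := X))
  | insert _ _ ha ih =>
    rename_i a s'
    simp only [Finset.sum_insert ha]
    exact (h a (Finset.mem_insert_self _ _)).add
      (ih fun i hi => h i (Finset.mem_insert_of_mem hi))

variable {μ : (X → ℝ) → ℝ} (hμ : IsMeas μ)
include hμ

lemma meas_add {f g : X → ℝ} (hf : IsUb f) (hg : IsUb g) :
    μ (fun x => f x + g x) = μ f + μ g := hμ.1 f g hf hg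

lemma meas_smul (c : ℝ) {f : X → ℝ} (hf : IsUb f) :
    μ (fun x => c * f x) = c * μ f := by
  have := hμ.2.1 c f hf
  simpa [Pi.smul_def, smul_eq_mul] using this

lemma meas_zero : μ (fun _ => (0:ℝ)) = 0 := by
  have := meas_smul hμ 0 (isUb_zero (X := X))
  simpa using this

lemma meas_sub {f g : X → ℝ} (hf : IsUb f) (hg : IsUb g) :
    μ (fun x => f x - g x) = μ f - μ g := by
  have h1 : μ (fun x => f x + (-1) * g x) = μ f + μ (fun x => (-1) * g x) :=
    meas_add hμ hf (hg.smul (-1))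
  have h2 : μ (fun x => (-1) * g x) = (-1) * μ g := meas_smul hμ (-1) hg
  have e : (fun x => f x - g x) = (fun x => f x + (-1) * g x) := by funext x; ring
  rw [e, h1, h2]; ring

lemma meas_finset_sum {ι : Type*} (s : Finset ι) (g : ι → X → ℝ)
    (h : ∀ i ∈ s, IsUb (g i)) : μ (fun y => ∑ i ∈ s, g i y) = ∑ i ∈ s, μ (g i) := by
  classical
  induction s using Finset.induction with
  | empty => simpa using meas_zero hμ
  | insert _ _ ha ih =>
    rename_i a s'
    simp only [Finset.sum_insert ha]
    rw [meas_add hμ (h a (Finset.mem_insert_self _ _))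
      (isUb_finset_sum s' g fun i hi => h i (Finset.mem_insert_of_mem hi)),
      ih fun i hi => h i (Finset.mem_insert_of_mem hi)]

lemma meas_bound {C : ℝ} (hC : ∀ f : X → ℝ, IsUb f → (∀ x, |f x| ≤ 1) → |μ f| ≤ C)
    {f : X → ℝ} (hf : IsUb f) {B : ℝ} (hB : 0 < B) (hfB : ∀ x, |f x| ≤ B) :
    |μ f| ≤ C * B := by
  have h1 : IsUb (fun x => B⁻¹ * f x) := hf.smul B⁻¹
  have h2 : ∀ x, |B⁻¹ * f x| ≤ 1 := by
    intro x
    rw [abs_mul, abs_of_pos (inv_pos.2 hB)]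
    rw [inv_mul_le_iff₀ hB, mul_one]
    exact hfB x
  have h3 := hC _ h1 h2
  have h4 : μ (fun x => B⁻¹ * f x) = B⁻¹ * μ f := meas_smul hμ B⁻¹ hf
  rw [h4, abs_mul, abs_of_pos (inv_pos.2 hB)] at h3
  calc |μ f| = B * (B⁻¹ * |μ f|) := by field_simp
  _ ≤ B * C := by exact mul_le_mul_of_nonneg_left h3 hB.le
  _ = C * B := mul_comm _ _

lemma mean_abs_le (hpos : IsPositive μ) (h1 : μ (fun _ => 1) = 1)
    {r : X → ℝ} (hr : IsUb r) {ε : ℝ} (hrε : ∀ x, |r x| ≤ ε) : |μ r| ≤ ε := by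
  have hconst : ∀ c : ℝ, μ (fun _ => c) = c := by
    intro c
    have := meas_smul hμ c (isUb_const (1:ℝ))
    simp only [mul_one] at this
    rw [this, h1, mul_one]
  have hub1 : IsUb (fun x => (fun _ : X => ε) x - r x) := (isUb_const ε).sub hr
  have hub2 : IsUb (fun x => r x - (fun _ : X => -ε) x) := hr.sub (isUb_const (-ε))
  have hp1 : 0 ≤ μ (fun x => (fun _ : X => ε) x - r x) := by
    apply hpos _ hub1
    intro x
    have := (abs_le.1 (hrε x)).2
    simpa using this
  have hp2 : 0 ≤ μ (fun x => r x - (fun _ : X => -ε) x) := by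
    apply hpos _ hub2
    intro x
    have := (abs_le.1 (hrε x)).1
    simp only [sub_neg_eq_add]
    linarith
  rw [meas_sub hμ (isUb_const ε) hr, hconst] at hp1
  rw [meas_sub hμ hr (isUb_const (-ε)), hconst] at hp2
  rw [abs_le]; constructor <;> linarith

end basic

section ucreal
variable {X : Type*} [UniformSpace X]

lemma uc_mem_eps {f : X → ℝ} (hf : UniformContinuous f) {ε : ℝ} (hε : 0 < ε) :
    {p : X × X | |f p.2 - f p.1| < ε} ∈ 𝓤 X := by
  have h := hf (Metric.dist_mem_uniformity hε)
  have : {p : X × X | dist (f p.1) (f p.2) < ε} ∈ 𝓤 X := h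
  apply Filter.mem_of_superset this
  intro p hp
  simp only [Set.mem_setOf_eq, Real.dist_eq] at hp ⊢
  rwa [abs_sub_comm]

lemma uc_of_eps {φ : X → ℝ}
    (h : ∀ ε : ℝ, 0 < ε → ∃ s ∈ 𝓤 X, ∀ p : X × X, p ∈ s → |φ p.2 - φ p.1| ≤ ε) :
    UniformContinuous φ := by
  rw [UniformContinuous]
  intro U hU
  obtain ⟨ε, hε, hUε⟩ := Metric.mem_uniformity_dist.1 hU
  obtain ⟨s, hs, hsP⟩ := h (ε/2) (half_pos hε)
  apply Filter.mem_of_superset hs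
  intro p hp
  apply hUε
  rw [Real.dist_eq, abs_sub_comm]
  exact lt_of_le_of_lt (hsP p hp) (half_lt_self hε)

end ucreal

lemma hb_decomp {E : Type*} [AddCommGroup E] [Module ℝ E] (Λ : E →ₗ[ℝ] ℝ) (p q : E → ℝ)
    (hp_hom : ∀ c : ℝ, 0 < c → ∀ x, p (c • x) = c * p x)
    (hp_add : ∀ x y, p (x + y) ≤ p x + p y)
    (hq_hom : ∀ c : ℝ, 0 < c → ∀ x, q (c • x) = c * q x)
    (hq_add : ∀ x y, q (x + y) ≤ q x + q y)
    (h : ∀ x, Λ x ≤ p x + q x) :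
    ∃ Λ₁ Λ₂ : E →ₗ[ℝ] ℝ, (∀ x, Λ₁ x ≤ p x) ∧ (∀ x, Λ₂ x ≤ q x) ∧
      ∀ x, Λ x = Λ₁ x + Λ₂ x := by
  have hp0 : p 0 = 0 := by
    have := hp_hom 2 (by norm_num) 0
    simp at this; linarith
  have hq0 : q 0 = 0 := by
    have := hq_hom 2 (by norm_num) 0
    simp at this; linarith
  set d : E →ₗ[ℝ] E × E := LinearMap.prod LinearMap.id LinearMap.id with hd
  set D : Submodule ℝ (E × E) := LinearMap.range d with hD
  set f0 : D →ₗ[ℝ] ℝ := Λ.comp ((LinearMap.fst ℝ E E).comp D.subtype) with hf0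
  set f : (E × E) →ₗ.[ℝ] ℝ := ⟨D, f0⟩ with hf
  set N : E × E → ℝ := fun z => p z.1 + q z.2 with hN
  have N_hom : ∀ c : ℝ, 0 < c → ∀ z, N (c • z) = c * N z := by
    intro c hc z
    simp only [hN, Prod.smul_fst, Prod.smul_snd, hp_hom c hc, hq_hom c hc]
    ring
  have N_add : ∀ z w, N (z + w) ≤ N z + N w := by
    intro z w
    simp only [hN, Prod.fst_add, Prod.snd_add]
    have := hp_add z.1 w.1; have := hq_add z.2 w.2; linarith
  have hfN : ∀ z : f.domain, f z ≤ N z := by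
    rintro ⟨z, hz⟩
    obtain ⟨a, ha⟩ := hz
    have hz1 : z.1 = a := by rw [← ha]; rfl
    have hz2 : z.2 = a := by rw [← ha]; rfl
    show Λ z.1 ≤ p z.1 + q z.2
    rw [hz1, hz2]; exact h a
  obtain ⟨g, hg1, hg2⟩ := exists_extension_of_le_sublinear f N N_hom N_add hfN
  refine ⟨g.comp (LinearMap.inl ℝ E E), g.comp (LinearMap.inr ℝ E E), ?_, ?_, ?_⟩
  · intro x
    have := hg2 (x, 0)
    simpa [hN, hq0] using this
  · intro x
    have := hg2 (0, x)
    simpa [hN, hp0] using this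
  · intro x
    have hmem : (x, x) ∈ D := ⟨x, rfl⟩
    have h1 : g (x, x) = f ⟨(x,x), hmem⟩ := hg1 ⟨(x,x), hmem⟩
    have h2 : f ⟨(x,x), hmem⟩ = Λ x := rfl
    have h3 : g (x, x) = g (x, 0) + g (0, x) := by
      rw [← map_add]; norm_num
    simp only [LinearMap.comp_apply, LinearMap.inl_apply, LinearMap.inr_apply]
    rw [← h3, h1, h2]

lemma factor_through {E W : Type*} [AddCommGroup E] [Module ℝ E] [AddCommGroup W] [Module ℝ W]
    (Ψ : E →ₗ[ℝ] W) (Λ₁ : E →ₗ[ℝ] ℝ) (hker : ∀ x, Ψ x = 0 → Λ₁ x = 0) :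
    ∃ ℓ : W →ₗ[ℝ] ℝ, ∀ x, Λ₁ x = ℓ (Ψ x) := by
  obtain ⟨σ, hσ⟩ := Ψ.rangeRestrict.exists_rightInverse_of_surjective
    (LinearMap.range_rangeRestrict Ψ ▸ rfl)
  obtain ⟨Q, hQ⟩ := Submodule.exists_isCompl (LinearMap.range Ψ)
  set π := Submodule.projectionOnto _ _ hQ with hπ
  refine ⟨Λ₁.comp (σ.comp π), fun x => ?_⟩
  have h1 : π (Ψ x) = Ψ.rangeRestrict x := by
    have : Ψ x ∈ LinearMap.range Ψ := ⟨x, rfl⟩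
    have := Submodule.projectionOnto_apply_left hQ ⟨Ψ x, this⟩
    exact this
  have h2 : Ψ.rangeRestrict (σ (Ψ.rangeRestrict x)) = Ψ.rangeRestrict x := by
    have := congrArg (fun (m : LinearMap.range Ψ →ₗ[ℝ] LinearMap.range Ψ) => m (Ψ.rangeRestrict x)) hσ
    simpa only [LinearMap.comp_apply, LinearMap.id_apply] using this
  have h3 : Ψ (σ (Ψ.rangeRestrict x) - x) = 0 := by
    have := congrArg (Subtype.val) h2
    simp only [LinearMap.rangeRestrict, LinearMap.codRestrict_apply] at this
    simp [map_sub, this]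
  have h4 := hker _ h3
  simp only [LinearMap.comp_apply, h1]
  rw [map_sub] at h4
  linarith

set_option maxHeartbeats 2000000 in
theorem stmt18 {G : Type*} [Group G] [TopologicalSpace G] [IsTopologicalGroup G] :
    letI : UniformSpace G := IsTopologicalGroup.rightUniformSpace G
    ∀ μ ν : (G → ℝ) → ℝ,
      IsMeas ν → IsPositive ν → ν (fun _ => 1) = 1 →
      (∀ (x : G) (g : G → ℝ), IsUb g → ν (fun y => g (x * y)) = ν g) →
      IsMeas μ → IsUniformMeasure μ →
      ∀ f : G → ℝ, IsUb f →
        IsUb (fun y => μ fun x => f (x * y)) ∧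
          ν (fun y => μ fun x => f (x * y)) = conv μ ν f ∧
          conv μ ν f = μ (fun _ => 1) * ν f := by
  letI : UniformSpace G := IsTopologicalGroup.rightUniformSpace G
  intro μ ν hνm hνpos hν1 hinv hμm hμu f hf
  obtain ⟨hfu, Cf, hCf⟩ := id hf
  have hCf0 : 0 ≤ Cf := (abs_nonneg (f 1)).trans (hCf 1)
  -- uniformity description
  have hexV : ∀ ε : ℝ, 0 < ε → ∃ V ∈ 𝓝 (1:G), ∀ a b : G, b * a⁻¹ ∈ V → |f b - f a| < ε := by
    intro ε hε
    have h1 := uc_mem_eps hfu hε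
    rw [show (𝓤 G) = comap (fun p : G × G => p.2 / p.1) (𝓝 1) from by simp only [div_eq_mul_inv]; rfl, Filter.mem_comap] at h1
    obtain ⟨V, hV, hVsub⟩ := h1
    refine ⟨V, hV, fun a b hab => ?_⟩
    have : (a, b) ∈ (fun p : G × G => p.2 / p.1) ⁻¹' V := by
      simp only [Set.mem_preimage, div_eq_mul_inv]
      exact hab
    exact hVsub this
  have hsV : ∀ V ∈ 𝓝 (1:G), {p : G × G | p.2 * p.1⁻¹ ∈ V} ∈ 𝓤 G := by
    intro V hV
    have h1 : (fun p : G × G => p.2 / p.1) ⁻¹' V ∈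
        comap (fun p : G × G => p.2 / p.1) (𝓝 (1:G)) := Filter.preimage_mem_comap hV
    rw [show comap (fun p : G × G => p.2 / p.1) (𝓝 (1:G)) = 𝓤 G from by simp only [div_eq_mul_inv]; rfl] at h1
    apply Filter.mem_of_superset h1
    intro p hp
    simpa [div_eq_mul_inv] using hp
  -- translates
  have hmul_right : ∀ y : G, UniformContinuous (fun x : G => x * y) := by
    intro y
    rw [UniformContinuous, show (𝓤 G) = comap (fun p : G × G => p.2 / p.1) (𝓝 1) from by simp only [div_eq_mul_inv]; rfl,
      tendsto_comap_iff]
    exact tendsto_comap.congr fun p => by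
      simp [div_eq_mul_inv, mul_inv_rev, mul_assoc]
  have hmul_left : ∀ x : G, UniformContinuous (fun y : G => x * y) := by
    intro x
    have hc : Continuous (fun a : G => x * a * x⁻¹) := by continuity
    have h : Tendsto (fun a : G => x * a * x⁻¹) (𝓝 1) (𝓝 1) := by
      have := hc.tendsto 1
      simpa using this
    rw [UniformContinuous, show (𝓤 G) = comap (fun p : G × G => p.2 / p.1) (𝓝 1) from by simp only [div_eq_mul_inv]; rfl,
      tendsto_comap_iff]
    exact (h.comp tendsto_comap).congr fun p => by
      simp [div_eq_mul_inv, mul_inv_rev, mul_assoc]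
  have hub_right : ∀ y : G, IsUb (fun x => f (x * y)) := by
    intro y
    exact ⟨hfu.comp (hmul_right y), ⟨Cf, fun x => hCf _⟩⟩
  have hub_left : ∀ x : G, IsUb (fun y => f (x * y)) := by
    intro x
    exact ⟨hfu.comp (hmul_left x), ⟨Cf, fun y => hCf _⟩⟩
  have habs : ∀ a b : ℝ, |a - b| ≤ |a| + |b| := fun a b => by
    rw [sub_eq_add_neg]
    exact (abs_add_le _ _).trans_eq (by rw [abs_neg])
  obtain ⟨Cμ, hCμ⟩ := id hμm.2.2
  set φ : G → ℝ := fun y => μ fun x => f (x * y) with hφdef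
  set μ1 : ℝ := μ (fun _ => 1) with hμ1def
  -- Part A : IsUb φ
  set H2 : Set (G → ℝ) := {g | ∃ u v : G, g = fun x => f (x * u) - f (x * v)} with hH2def
  have hH2bdd : ∃ C : ℝ, ∀ g ∈ H2, ∀ x, |g x| ≤ C := by
    refine ⟨Cf + Cf, ?_⟩
    rintro g ⟨u, v, rfl⟩ x
    exact (habs _ _).trans (add_le_add (hCf _) (hCf _))
  have hH2uec : H2.UniformEquicontinuous := by
    intro U hU
    obtain ⟨ε, hε, hUε⟩ := Metric.mem_uniformity_dist.1 hU
    obtain ⟨V, hV, hVf⟩ := hexV (ε/2) (half_pos hε)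
    filter_upwards [hsV V hV] with xy hxy
    rintro ⟨g, u, v, rfl⟩
    apply hUε
    rw [Real.dist_eq]
    have h1 : |f (xy.2 * u) - f (xy.1 * u)| < ε/2 := by
      apply hVf
      have : (xy.2 * u) * (xy.1 * u)⁻¹ = xy.2 * xy.1⁻¹ := by
        simp [mul_inv_rev, mul_assoc]
      rw [this]; exact hxy
    have h2 : |f (xy.2 * v) - f (xy.1 * v)| < ε/2 := by
      apply hVf
      have : (xy.2 * v) * (xy.1 * v)⁻¹ = xy.2 * xy.1⁻¹ := by
        simp [mul_inv_rev, mul_assoc]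
      rw [this]; exact hxy
    have e : (f (xy.1 * u) - f (xy.1 * v)) - (f (xy.2 * u) - f (xy.2 * v))
        = (f (xy.1 * u) - f (xy.2 * u)) - (f (xy.1 * v) - f (xy.2 * v)) := by ring
    rw [e]
    have h1' : |f (xy.1 * u) - f (xy.2 * u)| < ε/2 := by rwa [abs_sub_comm] at h1
    have h2' : |f (xy.1 * v) - f (xy.2 * v)| < ε/2 := by rwa [abs_sub_comm] at h2
    calc |(f (xy.1 * u) - f (xy.2 * u)) - (f (xy.1 * v) - f (xy.2 * v))|
        ≤ |f (xy.1 * u) - f (xy.2 * u)| + |f (xy.1 * v) - f (xy.2 * v)| := habs _ _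
    _ < ε := by linarith
  have hH20 : (0 : G → ℝ) ∈ H2 := ⟨1, 1, by funext x; simp⟩
  have hφu : UniformContinuous φ := by
    apply uc_of_eps
    intro ε hε
    obtain ⟨S, δ, hδ, hKey⟩ := hμu H2 hH2bdd hH2uec 0 hH20 ε hε
    obtain ⟨V, hV, hVf⟩ := hexV δ hδ
    have hV'ex : ∃ V' ∈ 𝓝 (1:G), ∀ a ∈ V', ∀ x ∈ S, x * a * x⁻¹ ∈ V := by
      refine ⟨⋂ x ∈ (↑S : Set G), (fun a => x * a * x⁻¹) ⁻¹' V,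
        (Filter.biInter_mem S.finite_toSet).2 fun x _ => ?_, fun a ha x hx => ?_⟩
      · have hc : Continuous (fun a : G => x * a * x⁻¹) := by continuity
        exact hc.continuousAt.preimage_mem_nhds (by simpa using hV)
      · exact Set.mem_iInter₂.1 ha x (Finset.mem_coe.2 hx)
    obtain ⟨V', hV'mem, hV'prop⟩ := hV'ex
    refine ⟨{p : G × G | p.2 * p.1⁻¹ ∈ V'}, hsV V' hV'mem, ?_⟩
    rintro ⟨v, u⟩ hp
    simp only [Set.mem_setOf_eq] at hp
    have hgH2 : (fun x => f (x * u) - f (x * v)) ∈ H2 := ⟨u, v, rfl⟩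
    have hgsmall : ∀ x ∈ S, |(fun x => f (x * u) - f (x * v)) x - (0 : G → ℝ) x| < δ := by
      intro x hx
      have hconj : (x * u) * (x * v)⁻¹ ∈ V := by
        have h2 : (x * u) * (x * v)⁻¹ = x * (u * v⁻¹) * x⁻¹ := by
          simp [mul_inv_rev, mul_assoc]
        rw [h2]
        exact hV'prop _ hp x hx
      have := hVf (x * v) (x * u) hconj
      simpa using this
    have hμg := hKey _ hgH2 hgsmall
    have hμ0 : μ (0 : G → ℝ) = 0 := meas_zero hμm
    rw [hμ0, sub_zero] at hμg
    have hμg' : μ (fun x => f (x * u) - f (x * v)) = φ u - φ v :=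
      meas_sub hμm (hub_right u) (hub_right v)
    rw [hμg'] at hμg
    exact le_of_lt hμg
  have hφbdd : ∀ y, |φ y| ≤ Cμ * (Cf + 1) := by
    intro y
    exact meas_bound hμm hCμ (hub_right y) (by linarith) (fun x => (hCf _).trans (by linarith))
  have hφub : IsUb φ := ⟨hφu, ⟨Cμ * (Cf + 1), hφbdd⟩⟩
  -- Part C
  have hC : conv μ ν f = μ1 * ν f := by
    show μ (fun x => ν fun y => f (x * y)) = μ1 * ν f
    have e : (fun x => ν fun y => f (x * y)) = fun _ : G => ν f :=
      funext fun x => hinv x f hf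
    rw [e]
    have h2 := meas_smul hμm (ν f) (isUb_const (1:ℝ))
    simp only [mul_one] at h2
    rw [h2, hμ1def, mul_comm]
  -- Part B : ν φ = μ1 * ν f
  have hB : ν φ = μ1 * ν f := by
    classical
    set hky : G → G → ℝ := fun y x => f (x * y) - f y with hkydef
    have hkyub : ∀ y, IsUb (hky y) := fun y => (hub_right y).sub (isUb_const (f y))
    set T : (G →₀ ℝ) →ₗ[ℝ] (G → ℝ) := Finsupp.linearCombination ℝ hky with hTdef
    have hT : ∀ (l : G →₀ ℝ) (x : G), T l x = ∑ y ∈ l.support, l y * hky y x := by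
      intro l x
      rw [hTdef]
      simp [Finsupp.linearCombination_apply, Finsupp.sum, Finset.sum_apply, smul_eq_mul]
    have hTub : ∀ l, IsUb (T l) := by
      intro l
      induction l using Finsupp.induction with
      | zero => rw [map_zero]; exact isUb_zero
      | single_add a b l hna hb ih =>
        rw [map_add]
        have h1 : T (Finsupp.single a b) = fun x => b * hky a x := by
          rw [hTdef, Finsupp.linearCombination_single]
          funext x
          simp [smul_eq_mul]
        rw [h1]
        exact IsUb.add (IsUb.smul b (hkyub a)) ih
    set Λ : (G →₀ ℝ) →ₗ[ℝ] ℝ :=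
      { toFun := fun l => μ (T l),
        map_add' := fun a b => by
          show μ (T (a + b)) = μ (T a) + μ (T b)
          rw [map_add]
          exact meas_add hμm (hTub a) (hTub b),
        map_smul' := fun c l => by
          show μ (T (c • l)) = (RingHom.id ℝ) c • μ (T l)
          rw [map_smul]
          simp only [RingHom.id_apply, smul_eq_mul]
          exact meas_smul hμm c (hTub l) } with hΛdef
    have hΛ : ∀ l, Λ l = μ (T l) := fun l => rfl
    have hTsingle : ∀ y : G, T (Finsupp.single y 1) = hky y := by
      intro y; rw [hTdef, Finsupp.linearCombination_single, one_smul]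
    have key : ∀ ε : ℝ, 0 < ε → |ν φ - μ1 * ν f| ≤ ε := by
      intro ε hε
      set H : Set (G → ℝ) := {g | ∃ l : G →₀ ℝ, (∑ y ∈ l.support, |l y|) ≤ 1 ∧ g = T l}
        with hHdef
      have hhkbd : ∀ y x, |hky y x| ≤ Cf + Cf := fun y x =>
        (habs _ _).trans (add_le_add (hCf _) (hCf _))
      have hHbdd : ∃ C, ∀ g ∈ H, ∀ x, |g x| ≤ C := by
        refine ⟨Cf + Cf, ?_⟩
        rintro g ⟨l, hl1, rfl⟩ x
        rw [hT]
        calc |∑ y ∈ l.support, l y * hky y x| ≤ ∑ y ∈ l.support, |l y * hky y x| :=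
            Finset.abs_sum_le_sum_abs _ _
        _ ≤ ∑ y ∈ l.support, |l y| * (Cf + Cf) := by
            refine Finset.sum_le_sum fun y _ => ?_
            rw [abs_mul]
            exact mul_le_mul_of_nonneg_left (hhkbd y x) (abs_nonneg _)
        _ = (∑ y ∈ l.support, |l y|) * (Cf + Cf) := by rw [Finset.sum_mul]
        _ ≤ 1 * (Cf + Cf) := mul_le_mul_of_nonneg_right hl1 (by linarith)
        _ = Cf + Cf := one_mul _
      have hHuec : H.UniformEquicontinuous := by
        intro U hU
        obtain ⟨ε₂, hε₂, hUε⟩ := Metric.mem_uniformity_dist.1 hU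
        obtain ⟨V, hV, hVf⟩ := hexV (ε₂/2) (half_pos hε₂)
        filter_upwards [hsV V hV] with xy hxy
        rintro ⟨g, l, hl1, rfl⟩
        apply hUε
        rw [Real.dist_eq]
        have hdiff : T l xy.1 - T l xy.2
            = ∑ y ∈ l.support, l y * (f (xy.1 * y) - f (xy.2 * y)) := by
          rw [hT, hT, ← Finset.sum_sub_distrib]
          refine Finset.sum_congr rfl fun y _ => ?_
          simp only [hkydef]
          ring
        rw [hdiff]
        have hterm : ∀ y ∈ l.support,
            |l y * (f (xy.1 * y) - f (xy.2 * y))| ≤ |l y| * (ε₂/2) := by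
          intro y _
          rw [abs_mul]
          refine mul_le_mul_of_nonneg_left ?_ (abs_nonneg _)
          have h1 : |f (xy.2 * y) - f (xy.1 * y)| < ε₂/2 := by
            apply hVf
            have h2 : (xy.2 * y) * (xy.1 * y)⁻¹ = xy.2 * xy.1⁻¹ := by
              simp [mul_inv_rev, mul_assoc]
            rw [h2]; exact hxy
          rw [abs_sub_comm] at h1
          exact le_of_lt h1
        calc |∑ y ∈ l.support, l y * (f (xy.1 * y) - f (xy.2 * y))|
            ≤ ∑ y ∈ l.support, |l y * (f (xy.1 * y) - f (xy.2 * y))| :=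
            Finset.abs_sum_le_sum_abs _ _
        _ ≤ ∑ y ∈ l.support, |l y| * (ε₂/2) := Finset.sum_le_sum hterm
        _ = (∑ y ∈ l.support, |l y|) * (ε₂/2) := by rw [Finset.sum_mul]
        _ ≤ 1 * (ε₂/2) := mul_le_mul_of_nonneg_right hl1 (by linarith)
        _ < ε₂ := by linarith
      have hH0 : (0 : G → ℝ) ∈ H := ⟨0, by simp, (map_zero T).symm⟩
      obtain ⟨S, δ, hδ, hKey⟩ := hμu H hHbdd hHuec 0 hH0 ε hε
      have hμ0 : μ (0 : G → ℝ) = 0 := meas_zero hμm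
      have hKey' : ∀ l : G →₀ ℝ, (∑ y ∈ l.support, |l y|) ≤ 1 →
          (∀ x ∈ S, |T l x| < δ) → |μ (T l)| < ε := by
        intro l h1 h2
        have h3 := hKey (T l) ⟨l, h1, rfl⟩ (fun x hx => by simpa using h2 x hx)
        rwa [hμ0, sub_zero] at h3
      have hεδ : 0 ≤ ε/δ := le_of_lt (div_pos hε hδ)
      -- domination
      have hdom : ∀ l : G →₀ ℝ,
          |Λ l| ≤ (ε/δ) * (∑ x ∈ S, |T l x|) + ε * (∑ y ∈ l.support, |l y|) := by
        intro l
        rcases eq_or_ne l 0 with rfl | hl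
        · have h1 : Λ (0 : G →₀ ℝ) = 0 := map_zero Λ
          have h2 : ∀ x : G, T (0 : G →₀ ℝ) x = 0 := by
            intro x; rw [map_zero]; rfl
          rw [h1]
          simp [h2]
        · set n := ∑ y ∈ l.support, |l y| with hndef
          have hn : 0 < n := by
            obtain ⟨a, ha⟩ := Finsupp.support_nonempty_iff.2 hl
            refine Finset.sum_pos' (fun y _ => abs_nonneg _) ⟨a, ha, ?_⟩
            exact abs_pos.2 (Finsupp.mem_support_iff.1 ha)
          set sS := ∑ x ∈ S, |T l x| with hsdef
          have hs0 : 0 ≤ sS := Finset.sum_nonneg fun x _ => abs_nonneg _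
          set Dq := n + sS/δ with hDdef
          have hD : 0 < Dq := by
            have : 0 ≤ sS/δ := div_nonneg hs0 hδ.le
            rw [hDdef]; linarith
          set l' : G →₀ ℝ := Dq⁻¹ • l with hl'def
          have hsupp : l'.support = l.support := by
            rw [hl'def]; exact Finsupp.support_smul_eq (inv_ne_zero hD.ne')
          have hTl' : ∀ x, T l' x = Dq⁻¹ * T l x := by
            intro x
            rw [hl'def, map_smul]
            simp [smul_eq_mul]
          have hl'1 : (∑ y ∈ l'.support, |l' y|) ≤ 1 := by
            rw [hsupp]
            have he : ∀ y : G, |l' y| = Dq⁻¹ * |l y| := by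
              intro y
              rw [hl'def]
              simp [Finsupp.smul_apply, smul_eq_mul, abs_mul, abs_of_pos (inv_pos.2 hD)]
            rw [Finset.sum_congr rfl fun y _ => he y, ← Finset.mul_sum, ← hndef]
            rw [inv_mul_le_iff₀ hD, mul_one]
            have : 0 ≤ sS/δ := div_nonneg hs0 hδ.le
            rw [hDdef]; linarith
          have hlt : ∀ x ∈ S, |T l' x| < δ := by
            intro x hx
            rw [hTl', abs_mul, abs_of_pos (inv_pos.2 hD)]
            have h1 : |T l x| ≤ sS :=
              Finset.single_le_sum (f := fun x => |T l x|) (fun x _ => abs_nonneg _) hx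
            have h2 : sS < δ * Dq := by
              rw [hDdef, mul_add]
              have h3 : δ * (sS/δ) = sS := by field_simp
              rw [h3]
              nlinarith
            have h4 : Dq⁻¹ * sS < Dq⁻¹ * (δ * Dq) :=
              mul_lt_mul_of_pos_left h2 (inv_pos.2 hD)
            have h5 : Dq⁻¹ * (δ * Dq) = δ := by
              rw [mul_comm δ Dq, ← mul_assoc, inv_mul_cancel₀ hD.ne', one_mul]
            have h6 : Dq⁻¹ * |T l x| ≤ Dq⁻¹ * sS :=
              mul_le_mul_of_nonneg_left h1 (le_of_lt (inv_pos.2 hD))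
            linarith
          have hsmall := hKey' l' hl'1 hlt
          have hμl' : μ (T l') = Dq⁻¹ * μ (T l) := by
            have e : T l' = fun x => Dq⁻¹ * T l x := funext hTl'
            rw [e]
            exact meas_smul hμm _ (hTub l)
          rw [hμl', abs_mul, abs_of_pos (inv_pos.2 hD)] at hsmall
          have hfin : |μ (T l)| < ε * Dq := by
            have h7 := mul_lt_mul_of_pos_left hsmall hD
            rw [← mul_assoc, mul_inv_cancel₀ hD.ne', one_mul] at h7
            linarith [h7, mul_comm Dq ε]
          calc |Λ l| = |μ (T l)| := by rw [hΛ]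
          _ ≤ ε * Dq := le_of_lt hfin
          _ = (ε/δ) * sS + ε * n := by rw [hDdef]; ring
      -- sublinearity
      have hp_hom : ∀ c : ℝ, 0 < c → ∀ l : G →₀ ℝ,
          (ε/δ) * (∑ x ∈ S, |T (c • l) x|) = c * ((ε/δ) * ∑ x ∈ S, |T l x|) := by
        intro c hc l
        have e : ∀ x : G, |T (c • l) x| = c * |T l x| := by
          intro x
          rw [map_smul]
          simp [smul_eq_mul, abs_mul, abs_of_pos hc]
        rw [Finset.sum_congr rfl fun x _ => e x, ← Finset.mul_sum]
        ring
      have hp_add : ∀ l m : G →₀ ℝ,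
          (ε/δ) * (∑ x ∈ S, |T (l + m) x|) ≤
            (ε/δ) * (∑ x ∈ S, |T l x|) + (ε/δ) * (∑ x ∈ S, |T m x|) := by
        intro l m
        have hsum : (∑ x ∈ S, |T (l + m) x|) ≤ (∑ x ∈ S, |T l x|) + ∑ x ∈ S, |T m x| := by
          rw [← Finset.sum_add_distrib]
          refine Finset.sum_le_sum fun x _ => ?_
          rw [map_add]
          exact abs_add_le _ _
        calc (ε/δ) * (∑ x ∈ S, |T (l + m) x|)
            ≤ (ε/δ) * ((∑ x ∈ S, |T l x|) + ∑ x ∈ S, |T m x|) :=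
            mul_le_mul_of_nonneg_left hsum hεδ
        _ = _ := by ring
      have hq_hom : ∀ c : ℝ, 0 < c → ∀ l : G →₀ ℝ,
          ε * (∑ y ∈ (c • l).support, |(c • l) y|) = c * (ε * ∑ y ∈ l.support, |l y|) := by
        intro c hc l
        rw [Finsupp.support_smul_eq hc.ne']
        have e : ∀ y : G, |(c • l) y| = c * |l y| := by
          intro y
          rw [Finsupp.smul_apply]
          simp [smul_eq_mul, abs_mul, abs_of_pos hc]
        rw [Finset.sum_congr rfl fun y _ => e y, ← Finset.mul_sum]
        ring
      have hsum_ext : ∀ (u : Finset G) (m : G →₀ ℝ), m.support ⊆ u →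
          (∑ y ∈ m.support, |m y|) = ∑ y ∈ u, |m y| := by
        intro u m hsub
        exact Finset.sum_subset hsub fun x _ hx => by
          rw [Finsupp.notMem_support_iff.1 hx, abs_zero]
      have hq_add : ∀ l m : G →₀ ℝ,
          ε * (∑ y ∈ (l + m).support, |(l + m) y|) ≤
            ε * (∑ y ∈ l.support, |l y|) + ε * (∑ y ∈ m.support, |m y|) := by
        intro l m
        rw [hsum_ext _ _ (Finsupp.support_add (g₁ := l) (g₂ := m)),
          hsum_ext (l.support ∪ m.support) l Finset.subset_union_left,
          hsum_ext (l.support ∪ m.support) m Finset.subset_union_right]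
        have hsum : (∑ y ∈ l.support ∪ m.support, |(l + m) y|) ≤
            (∑ y ∈ l.support ∪ m.support, |l y|) + ∑ y ∈ l.support ∪ m.support, |m y| := by
          rw [← Finset.sum_add_distrib]
          refine Finset.sum_le_sum fun y _ => ?_
          rw [Finsupp.add_apply]
          exact abs_add_le _ _
        calc ε * (∑ y ∈ l.support ∪ m.support, |(l + m) y|)
            ≤ ε * ((∑ y ∈ l.support ∪ m.support, |l y|)
              + ∑ y ∈ l.support ∪ m.support, |m y|) :=
            mul_le_mul_of_nonneg_left hsum hε.le
        _ = _ := by ring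
      obtain ⟨Λ₁, Λ₂, hΛ₁, hΛ₂, hΛeq⟩ :=
        hb_decomp Λ (fun l => (ε/δ) * ∑ x ∈ S, |T l x|)
          (fun l => ε * ∑ y ∈ l.support, |l y|)
          hp_hom hp_add hq_hom hq_add (fun l => (le_abs_self _).trans (hdom l))
      -- factor Λ₁ through the coordinates on S
      set Ψ : (G →₀ ℝ) →ₗ[ℝ] ({x // x ∈ S} → ℝ) :=
        LinearMap.pi (fun x : {x // x ∈ S} =>
          (LinearMap.proj (R := ℝ) (φ := fun _ : G => ℝ) (↑x : G)).comp T) with hΨdef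
      have hΨ : ∀ (l : G →₀ ℝ) (x : {x // x ∈ S}), Ψ l x = T l ↑x := fun l x => rfl
      have hker : ∀ l, Ψ l = 0 → Λ₁ l = 0 := by
        intro l h0
        have hl0 : ∀ x ∈ S, T l x = 0 := by
          intro x hx
          have := congrFun h0 ⟨x, hx⟩
          simpa [hΨ] using this
        have hp0 : (ε/δ) * (∑ x ∈ S, |T l x|) = 0 := by
          rw [Finset.sum_eq_zero fun x hx => by rw [hl0 x hx, abs_zero], mul_zero]
        have h1 : Λ₁ l ≤ 0 := le_of_le_of_eq (hΛ₁ l) hp0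
        have hp0' : (ε/δ) * (∑ x ∈ S, |T (-l) x|) = 0 := by
          rw [Finset.sum_eq_zero fun x hx => ?_, mul_zero]
          rw [map_neg]
          simp [hl0 x hx]
        have h2 : Λ₁ (-l) ≤ 0 := le_of_le_of_eq (hΛ₁ (-l)) hp0'
        rw [map_neg] at h2
        linarith
      obtain ⟨ℓ, hℓ⟩ := factor_through Ψ Λ₁ hker
      set cc : {x // x ∈ S} → ℝ := fun x => ℓ (fun j => if x = j then 1 else 0) with hccdef
      have hΛ₁y : ∀ y : G, Λ₁ (Finsupp.single y 1) =
          ∑ x : {x // x ∈ S}, (f (↑x * y) - f y) * cc x := by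
        intro y
        rw [hℓ, LinearMap.pi_apply_eq_sum_univ]
        refine Finset.sum_congr rfl fun x _ => ?_
        have h1 : Ψ (Finsupp.single y 1) x = f (↑x * y) - f y := by
          rw [hΨ, hTsingle]
        rw [h1]
        simp [hccdef, smul_eq_mul]
      have hq_single : ∀ y : G,
          ε * (∑ z ∈ (Finsupp.single y (1:ℝ)).support, |(Finsupp.single y (1:ℝ)) z|) = ε := by
        intro y
        rw [Finsupp.support_single_ne_zero y one_ne_zero]
        simp
      have hrbd : ∀ y : G, |Λ₂ (Finsupp.single y 1)| ≤ ε := by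
        intro y
        rw [abs_le]
        constructor
        · have h3 : ε * (∑ z ∈ (-(Finsupp.single y (1:ℝ))).support,
              |(-(Finsupp.single y (1:ℝ))) z|) = ε := by
            rw [Finsupp.support_neg]
            simp only [Finsupp.coe_neg, Pi.neg_apply, abs_neg]
            exact hq_single y
          have h2 := le_of_le_of_eq (hΛ₂ (-(Finsupp.single y 1))) h3
          rw [map_neg] at h2
          linarith
        · exact le_of_le_of_eq (hΛ₂ _) (hq_single y)
      -- the pointwise decomposition
      have hsplit : ∀ y : G, φ y - f y * μ1 =
          (∑ x : {x // x ∈ S}, (f (↑x * y) - f y) * cc x) + Λ₂ (Finsupp.single y 1) := by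
        intro y
        have hb' : μ (fun _ : G => f y) = f y * μ1 := by
          have h4 := meas_smul hμm (f y) (isUb_const (1:ℝ))
          simp only [mul_one] at h4
          rw [h4, hμ1def]
        have h1 : μ (hky y) = φ y - f y * μ1 := by
          calc μ (hky y) = μ (fun x => f (x * y)) - μ (fun _ : G => f y) :=
              meas_sub hμm (hub_right y) (isUb_const (f y))
          _ = φ y - f y * μ1 := by rw [hb']
        have h2 : μ (hky y) = Λ (Finsupp.single y 1) := by rw [hΛ, hTsingle]
        rw [← h1, h2, hΛeq, hΛ₁y]
      -- uniform boundedness/continuity of the pieces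
      have hterm_ub : ∀ x : {x // x ∈ S}, IsUb (fun y => (f (↑x * y) - f y) * cc x) := by
        intro x
        have h1 := IsUb.smul (cc x) ((hub_left ↑x).sub hf)
        have e : (fun y => (f (↑x * y) - f y) * cc x)
            = fun y => cc x * (f (↑x * y) - f y) := funext fun y => mul_comm _ _
        rw [e]; exact h1
      have hSfun_ub : IsUb (fun y => ∑ x : {x // x ∈ S}, (f (↑x * y) - f y) * cc x) :=
        isUb_finset_sum Finset.univ _ (fun x _ => hterm_ub x)
      have hfμ1_ub : IsUb (fun y => f y * μ1) := by
        have h1 := IsUb.smul μ1 hf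
        have e : (fun y => f y * μ1) = fun y => μ1 * f y := funext fun y => mul_comm _ _
        rw [e]; exact h1
      have hr_ub : IsUb (fun y => Λ₂ (Finsupp.single y 1)) := by
        have e : (fun y => Λ₂ (Finsupp.single y 1)) =
            fun y => (φ y - f y * μ1) - ∑ x : {x // x ∈ S}, (f (↑x * y) - f y) * cc x := by
          funext y
          have := hsplit y
          linarith
        rw [e]
        exact (hφub.sub hfμ1_ub).sub hSfun_ub
      -- apply ν
      have hν_each : ∀ x : {x // x ∈ S}, ν (fun y => (f (↑x * y) - f y) * cc x) = 0 := by
        intro x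
        have e : (fun y => (f (↑x * y) - f y) * cc x)
            = fun y => cc x * (f (↑x * y) - f y) := funext fun y => mul_comm _ _
        rw [e, meas_smul hνm (cc x) ((hub_left ↑x).sub hf),
          meas_sub hνm (hub_left ↑x) hf, hinv ↑x f hf]
        ring
      have hνS : ν (fun y => ∑ x : {x // x ∈ S}, (f (↑x * y) - f y) * cc x) = 0 := by
        rw [meas_finset_sum hνm Finset.univ _ (fun x _ => hterm_ub x)]
        exact Finset.sum_eq_zero fun x _ => hν_each x
      have hνr : |ν (fun y => Λ₂ (Finsupp.single y 1))| ≤ ε :=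
        mean_abs_le hνm hνpos hν1 hr_ub hrbd
      have hνφ : ν (fun y => φ y - f y * μ1) = ν φ - μ1 * ν f := by
        rw [meas_sub hνm hφub hfμ1_ub]
        congr 1
        have e : (fun y => f y * μ1) = fun y => μ1 * f y := funext fun y => mul_comm _ _
        rw [e, meas_smul hνm μ1 hf]
      have hsplitν : ν (fun y => φ y - f y * μ1) =
          ν (fun y => ∑ x : {x // x ∈ S}, (f (↑x * y) - f y) * cc x)
          + ν (fun y => Λ₂ (Finsupp.single y 1)) := by
        rw [show (fun y => φ y - f y * μ1) = fun y =>
          (∑ x : {x // x ∈ S}, (f (↑x * y) - f y) * cc x) + Λ₂ (Finsupp.single y 1)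
          from funext hsplit]
        exact meas_add hνm hSfun_ub hr_ub
      rw [hνφ, hνS, zero_add] at hsplitν
      rw [hsplitν]
      exact hνr
    have h0 : |ν φ - μ1 * ν f| ≤ 0 := by
      refine le_of_forall_pos_le_add ?_
      intro ε hε
      simpa using key ε hε
    have h1 : ν φ - μ1 * ν f = 0 := abs_eq_zero.1 (le_antisymm h0 (abs_nonneg _))
    linarith
  exact ⟨hφub, by rw [hB, hC], hC⟩
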